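/- Let G be a group, N ⊴ H ≤ G with [H:N] finite and invertible in the field R, χ : H → Rˣ a character. With the averaging map q : ind_N^G(χ|_N) → ind_H^G(χ) as above, the kernel of q equals the (λ, χ⁻¹)-augmentation submodule for the left H-action (λ(h)f)(g) = f(h⁻¹g): that is, ker q = ⟨λ(h)f − χ(h)⁻¹ f : h ∈ H, f ∈ ind_N^G(χ|_N)⟩, so q induces an isomorphism of the χ⁻¹-coinvariants (ind_N^G(χ|_N))_{λ,χ⁻¹} ≅ ind_H^G(χ). -/

import Mathlib

/-- The compactly induced representation `ind_H^G(χ)` in the discrete-group model: functions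
`f : G → R` with `f (h * g) = χ h * f g` supported on finitely many right cosets of `H`. -/
def Ind {G : Type*} (R : Type*) [Group G] [CommRing R] (H : Subgroup G) (χ : ↥H →* Rˣ) :
    Submodule R (G → R) where
  carrier := {f | (∀ (h : ↥H) (g : G), f (↑h * g) = (χ h : R) * f g) ∧
    ∃ S : Finset G, ∀ g, f g ≠ 0 → ∃ s ∈ S, ∃ h : ↥H, g = ↑h * s}
  add_mem' := by
    classical
    rintro f g ⟨hf1, Sf, hf2⟩ ⟨hg1, Sg, hg2⟩
    refine ⟨fun h x => by simp [hf1 h x, hg1 h x, mul_add], Sf ∪ Sg, ?_⟩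
    intro x hx
    by_cases h : f x ≠ 0
    · obtain ⟨s, hs, h'⟩ := hf2 x h
      exact ⟨s, Finset.mem_union_left _ hs, h'⟩
    · push_neg at h
      have hgx : g x ≠ 0 := by
        intro hg0
        apply hx
        simp [Pi.add_apply, h, hg0]
      obtain ⟨s, hs, h'⟩ := hg2 x hgx
      exact ⟨s, Finset.mem_union_right _ hs, h'⟩
  zero_mem' := ⟨fun h g => by simp, ∅, fun g hg => absurd rfl hg⟩
  smul_mem' := by
    rintro c f ⟨hf1, S, hf2⟩
    refine ⟨fun h g => by simp [hf1 h g]; ring, S, ?_⟩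
    intro g hg
    apply hf2
    intro h0
    apply hg
    simp [h0]

/-- The `(λ, χ⁻¹)`-augmentation submodule of `ind_N^G(χ|_N)` for the left translation action
`(λ(h) f)(g) = f (h⁻¹ g)` of `H`: it is spanned by the elements `λ(h) f − χ(h)⁻¹ f`. -/
def leftAugmentation {G R : Type*} [Group G] [CommRing R] (N H : Subgroup G) (hNH : N ≤ H)
    (χ : ↥H →* Rˣ) : Submodule R (G → R) :=
  Submodule.span R {x : G → R | ∃ (h : ↥H) (f : G → R),
    f ∈ Ind R N (χ.comp (Subgroup.inclusion hNH)) ∧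
    x = (fun g => f ((h : G)⁻¹ * g)) - (((χ h)⁻¹ : Rˣ) : R) • f}

section Aux

variable {G R : Type*} [Group G] [Field R] {N H : Subgroup G} (hNH : N ≤ H)
  {χ : ↥H →* Rˣ} {S : Finset ↥H}
  (hS : ∀ h : ↥H, ∃! s : ↥H, s ∈ S ∧ ∃ n ∈ N, (h : G) = n * ↑s)

/-- The unique coset representative in `S` of an element of `H`. -/
noncomputable def repS (h : ↥H) : ↥H := (hS h).choose

lemma repS_mem (h : ↥H) : repS hS h ∈ S := (hS h).choose_spec.1.1

lemma repS_spec (h : ↥H) : ∃ n ∈ N, (h : G) = n * ↑(repS hS h) :=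
  (hS h).choose_spec.1.2

lemma repS_unique {h s : ↥H} (hs : s ∈ S) (hn : ∃ n ∈ N, (h : G) = n * ↑s) :
    s = repS hS h := (hS h).choose_spec.2 s ⟨hs, hn⟩

lemma repS_eq_of {h h' : ↥H} (hmem : ((h : G) * (h' : G)⁻¹) ∈ N) :
    repS hS h = repS hS h' := by
  obtain ⟨n, hn, heq⟩ := repS_spec hS h'
  refine (repS_unique hS (repS_mem hS h') ⟨(h : G) * (h' : G)⁻¹ * n, mul_mem hmem hn, ?_⟩).symm
  rw [mul_assoc, ← heq]
  group

lemma repS_self {s : ↥H} (hs : s ∈ S) : repS hS s = s :=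
  (repS_unique hS hs ⟨1, one_mem _, by simp⟩).symm

include hNH in
lemma conj_mem' (hnorm : (N.subgroupOf H).Normal) (h : ↥H) {n : G} (hn : n ∈ N) :
    (h : G) * n * (h : G)⁻¹ ∈ N := by
  have := hnorm.conj_mem ⟨n, hNH hn⟩ (by simpa [Subgroup.mem_subgroupOf] using hn) h
  simpa [Subgroup.mem_subgroupOf] using this

lemma sum_repS_right (w : ↥H) (k : ↥H → R) :
    ∑ s ∈ S, k (repS hS (s * w)) = ∑ s ∈ S, k s := by
  refine Finset.sum_nbij' (fun s => repS hS (s * w)) (fun s => repS hS (s * w⁻¹))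
    (fun s _ => repS_mem hS _) (fun s _ => repS_mem hS _) ?_ ?_ (fun s _ => rfl)
  · intro s hs
    obtain ⟨n, hn, heq⟩ := repS_spec hS (s * w)
    push_cast at heq
    show repS hS (repS hS (s * w) * w⁻¹) = s
    have h1 : ((repS hS (s * w)) : G) = n⁻¹ * ((s : G) * (w : G)) := by
      rw [heq]; group
    have hmem : ((repS hS (s * w) * w⁻¹ : ↥H) : G) * (s : G)⁻¹ ∈ N := by
      have h2 : ((repS hS (s * w) * w⁻¹ : ↥H) : G) * (s : G)⁻¹ = n⁻¹ := by
        push_cast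
        rw [h1]; group
      rw [h2]; exact inv_mem hn
    rw [repS_eq_of hS hmem, repS_self hS hs]
  · intro s hs
    obtain ⟨n, hn, heq⟩ := repS_spec hS (s * w⁻¹)
    push_cast at heq
    show repS hS (repS hS (s * w⁻¹) * w) = s
    have h1 : ((repS hS (s * w⁻¹)) : G) = n⁻¹ * ((s : G) * (w : G)⁻¹) := by
      rw [heq]; group
    have hmem : ((repS hS (s * w⁻¹) * w : ↥H) : G) * (s : G)⁻¹ ∈ N := by
      have h2 : ((repS hS (s * w⁻¹) * w : ↥H) : G) * (s : G)⁻¹ = n⁻¹ := by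
        push_cast
        rw [h1]; group
      rw [h2]; exact inv_mem hn
    rw [repS_eq_of hS hmem, repS_self hS hs]

include hNH in
lemma sum_repS_left (hnorm : (N.subgroupOf H).Normal) (w : ↥H) (k : ↥H → R) :
    ∑ s ∈ S, k (repS hS (w * s)) = ∑ s ∈ S, k s := by
  refine Finset.sum_nbij' (fun s => repS hS (w * s)) (fun s => repS hS (w⁻¹ * s))
    (fun s _ => repS_mem hS _) (fun s _ => repS_mem hS _) ?_ ?_ (fun s _ => rfl)
  · intro s hs
    obtain ⟨n, hn, heq⟩ := repS_spec hS (w * s)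
    push_cast at heq
    show repS hS (w⁻¹ * repS hS (w * s)) = s
    have h1 : ((repS hS (w * s)) : G) = n⁻¹ * ((w : G) * (s : G)) := by
      rw [heq]; group
    have hmem : ((w⁻¹ * repS hS (w * s) : ↥H) : G) * (s : G)⁻¹ ∈ N := by
      have h2 : ((w⁻¹ * repS hS (w * s) : ↥H) : G) * (s : G)⁻¹
          = (w : G)⁻¹ * n⁻¹ * ((w : G)⁻¹)⁻¹ := by
        push_cast
        rw [h1]; group
      rw [h2]
      exact conj_mem' hNH hnorm w⁻¹ (inv_mem hn)
    rw [repS_eq_of hS hmem, repS_self hS hs]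
  · intro s hs
    obtain ⟨n, hn, heq⟩ := repS_spec hS (w⁻¹ * s)
    push_cast at heq
    show repS hS (w * repS hS (w⁻¹ * s)) = s
    have h1 : ((repS hS (w⁻¹ * s)) : G) = n⁻¹ * ((w : G)⁻¹ * (s : G)) := by
      rw [heq]; group
    have hmem : ((w * repS hS (w⁻¹ * s) : ↥H) : G) * (s : G)⁻¹ ∈ N := by
      have h2 : ((w * repS hS (w⁻¹ * s) : ↥H) : G) * (s : G)⁻¹
          = (w : G) * n⁻¹ * (w : G)⁻¹ := by
        push_cast
        rw [h1]; group
      rw [h2]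
      exact conj_mem' hNH hnorm w (inv_mem hn)
    rw [repS_eq_of hS hmem, repS_self hS hs]

include hS in
lemma term_eq (f : G → R)
    (hf : ∀ (n : ↥N) (g : G),
      f (↑n * g) = ((χ.comp (Subgroup.inclusion hNH)) n : R) * f g)
    (u : ↥H) (g : G) :
    (((χ u)⁻¹ : Rˣ) : R) * f ((u : G) * g)
      = (((χ (repS hS u))⁻¹ : Rˣ) : R) * f (↑(repS hS u) * g) := by
  obtain ⟨n, hn, heq⟩ := repS_spec hS u
  have hH : u = (⟨n, hNH hn⟩ : ↥H) * repS hS u := Subtype.ext (by push_cast; exact heq)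
  have h1 : f ((u : G) * g) = (χ ⟨n, hNH hn⟩ : R) * f (↑(repS hS u) * g) := by
    rw [heq, mul_assoc]
    have := hf ⟨n, hn⟩ (↑(repS hS u) * g)
    exact this
  have hchi : (χ u : Rˣ) = χ ⟨n, hNH hn⟩ * χ (repS hS u) := by
    have := congrArg χ hH
    rwa [map_mul] at this
  rw [h1, hchi, mul_inv]
  have ha : (χ (⟨n, hNH hn⟩ : ↥H) : R) ≠ 0 := Units.ne_zero _
  have hb : (χ (repS hS u) : R) ≠ 0 := Units.ne_zero _
  push_cast
  field_simp

include hS in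
lemma sum_left (hnorm : (N.subgroupOf H).Normal) (f : G → R)
    (hf : ∀ (n : ↥N) (g : G),
      f (↑n * g) = ((χ.comp (Subgroup.inclusion hNH)) n : R) * f g)
    (w : ↥H) (g : G) :
    ∑ s ∈ S, (((χ s)⁻¹ : Rˣ) : R) * f ((w : G) * ((s : G) * g))
      = (χ w : R) * ∑ s ∈ S, (((χ s)⁻¹ : Rˣ) : R) * f ((s : G) * g) := by
  rw [← sum_repS_left hNH hS hnorm w (fun t => (((χ t)⁻¹ : Rˣ) : R) * f ((t : G) * g)),
    Finset.mul_sum]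
  refine Finset.sum_congr rfl fun s _ => ?_
  rw [← term_eq hNH hS f hf (w * s) g]
  have hcoe : ((w * s : ↥H) : G) * g = (w : G) * ((s : G) * g) := by push_cast; group
  rw [hcoe, map_mul, mul_inv]
  have ha : (χ w : R) ≠ 0 := Units.ne_zero _
  have hb : (χ s : R) ≠ 0 := Units.ne_zero _
  push_cast
  field_simp

include hS in
lemma sum_right (f : G → R)
    (hf : ∀ (n : ↥N) (g : G),
      f (↑n * g) = ((χ.comp (Subgroup.inclusion hNH)) n : R) * f g)
    (w : ↥H) (g : G) :
    ∑ s ∈ S, (((χ s)⁻¹ : Rˣ) : R) * f ((s : G) * ((w : G) * g))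
      = (χ w : R) * ∑ s ∈ S, (((χ s)⁻¹ : Rˣ) : R) * f ((s : G) * g) := by
  rw [← sum_repS_right hS w (fun t => (((χ t)⁻¹ : Rˣ) : R) * f ((t : G) * g)),
    Finset.mul_sum]
  refine Finset.sum_congr rfl fun s _ => ?_
  rw [← term_eq hNH hS f hf (s * w) g]
  have hcoe : ((s * w : ↥H) : G) * g = (s : G) * ((w : G) * g) := by push_cast; group
  rw [hcoe, map_mul, mul_inv]
  have ha : (χ w : R) ≠ 0 := Units.ne_zero _
  have hb : (χ s : R) ≠ 0 := Units.ne_zero _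
  push_cast
  field_simp

/-- The averaging map, as a linear map. -/
noncomputable def Qlin (χ : ↥H →* Rˣ) (S : Finset ↥H) : (G → R) →ₗ[R] (G → R) where
  toFun f := fun g => (S.card : R)⁻¹ * ∑ s ∈ S, (((χ s)⁻¹ : Rˣ) : R) * f (↑s * g)
  map_add' f f' := by
    funext g
    simp only [Pi.add_apply, Finset.mul_sum]
    rw [← Finset.sum_add_distrib]
    exact Finset.sum_congr rfl fun s _ => by ring
  map_smul' c f := by
    funext g
    simp only [Pi.smul_apply, smul_eq_mul, RingHom.id_apply, Finset.mul_sum]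
    exact Finset.sum_congr rfl fun s _ => by ring

end Aux

/-- with `N ⊴ H ≤ G`, `[H:N]` finite and invertible in the field `R`, the kernel
of the averaging map `q : ind_N^G(χ|_N) → ind_H^G(χ)` is exactly the `(λ, χ⁻¹)`-augmentation
submodule, so `q` induces an isomorphism `(ind_N^G(χ|_N))_{λ,χ⁻¹} ≅ ind_H^G(χ)`. -/
theorem averaging_kernel_is_augmentation
    {G R : Type*} [Group G] [Field R] (N H : Subgroup G) (hNH : N ≤ H)
    (hnorm : (N.subgroupOf H).Normal)
    (χ : ↥H →* Rˣ) (S : Finset ↥H)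
    (hS : ∀ h : ↥H, ∃! s : ↥H, s ∈ S ∧ ∃ n ∈ N, (h : G) = n * ↑s)
    (hcard : (S.card : R) ≠ 0)
    (q : (G → R) → (G → R))
    (hq : ∀ f g, q f g = (S.card : R)⁻¹ *
      ∑ s ∈ S, (((χ s)⁻¹ : Rˣ) : R) * f (↑s * g)) :
    (∀ f ∈ Ind R N (χ.comp (Subgroup.inclusion hNH)),
      (q f = 0 ↔ f ∈ leftAugmentation N H hNH χ)) ∧
    ∃ e : (↥(Ind R N (χ.comp (Subgroup.inclusion hNH))) ⧸
        (leftAugmentation N H hNH χ).comap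
          (Ind R N (χ.comp (Subgroup.inclusion hNH))).subtype) ≃ₗ[R] ↥(Ind R H χ),
      ∀ f : ↥(Ind R N (χ.comp (Subgroup.inclusion hNH))),
        ((e (Submodule.Quotient.mk f) : G → R)) = q ↑f := by
  classical
  set χN := χ.comp (Subgroup.inclusion hNH) with hχN
  set M := Ind R N χN with hM
  set A := leftAugmentation N H hNH χ with hA
  set W := Ind R H χ with hW
  -- the averaging map as a linear map
  have hqQ : q = ⇑(Qlin χ S) := by
    funext f g
    exact hq f g
  have hQapp : ∀ (f : G → R) (g : G),
      Qlin χ S f g = (S.card : R)⁻¹ * ∑ s ∈ S, (((χ s)⁻¹ : Rˣ) : R) * f (↑s * g) :=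
    fun f g => rfl
  -- the augmentation is in the kernel
  have hQleft : ∀ f ∈ M, ∀ h : ↥H,
      Qlin χ S (fun g => f ((h : G)⁻¹ * g)) = (((χ h)⁻¹ : Rˣ) : R) • Qlin χ S f := by
    intro f hf h
    funext g
    rw [hQapp, Pi.smul_apply, smul_eq_mul, hQapp]
    have hsum := sum_left hNH hS hnorm f hf.1 h⁻¹ g
    have hcoe : ((h⁻¹ : ↥H) : G) = (h : G)⁻¹ := rfl
    rw [hcoe, map_inv] at hsum
    rw [hsum]
    push_cast
    ring
  have hAker : A ≤ LinearMap.ker (Qlin χ S) := by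
    rw [hA, leftAugmentation, Submodule.span_le]
    rintro x ⟨h, f, hf, rfl⟩
    have : Qlin χ S ((fun g => f ((h : G)⁻¹ * g)) - (((χ h)⁻¹ : Rˣ) : R) • f)
        = Qlin χ S (fun g => f ((h : G)⁻¹ * g)) - (((χ h)⁻¹ : Rˣ) : R) • Qlin χ S f := by
      rw [map_sub, map_smul]
    simp only [SetLike.mem_coe, LinearMap.mem_ker, this, hQleft f hf h, sub_self]
  -- q f - f lies in the augmentation
  have hsub : ∀ f ∈ M, Qlin χ S f - f ∈ A := by
    intro f hf
    have hrepr : Qlin χ S f - f = ∑ s ∈ S,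
        ((S.card : R)⁻¹ * (((χ s)⁻¹ : Rˣ) : R)) •
          ((fun g => f ((((s⁻¹ : ↥H) : G))⁻¹ * g)) - (((χ s⁻¹)⁻¹ : Rˣ) : R) • f) := by
      funext g
      simp only [Finset.sum_apply, Pi.sub_apply, Pi.smul_apply, smul_eq_mul]
      have hval : ∀ s : ↥H, (((s⁻¹ : ↥H) : G))⁻¹ = (s : G) := by intro s; simp
      have hval2 : ∀ s : ↥H, (((χ s⁻¹)⁻¹ : Rˣ) : R) = ((χ s : Rˣ) : R) := by
        intro s; rw [map_inv, inv_inv]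
      calc Qlin χ S f g - f g
          = (S.card : R)⁻¹ * ∑ s ∈ S, (((χ s)⁻¹ : Rˣ) : R) * f (↑s * g) - f g := by
            rw [hQapp]
        _ = ∑ s ∈ S, ((S.card : R)⁻¹ * ((((χ s)⁻¹ : Rˣ) : R) * f (↑s * g))
              - (S.card : R)⁻¹ * f g) := by
            rw [Finset.sum_sub_distrib, ← Finset.mul_sum, Finset.sum_const, nsmul_eq_mul,
              ← mul_assoc, mul_inv_cancel₀ hcard, one_mul]
        _ = ∑ s ∈ S, (S.card : R)⁻¹ * (((χ s)⁻¹ : Rˣ) : R)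
              * (f ((((s⁻¹ : ↥H) : G))⁻¹ * g) - (((χ s⁻¹)⁻¹ : Rˣ) : R) * f g) := by
            refine Finset.sum_congr rfl fun s _ => ?_
            rw [hval s, hval2 s]
            have h2 : (((χ s)⁻¹ : Rˣ) : R) * ((χ s : Rˣ) : R) = 1 := by
              rw [← Units.val_mul, inv_mul_cancel, Units.val_one]
            linear_combination ((S.card : R)⁻¹ * f g) * h2
    rw [hrepr]
    refine Submodule.sum_mem _ fun s _ => Submodule.smul_mem _ _ ?_
    exact Submodule.subset_span ⟨s⁻¹, f, hf, rfl⟩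
  -- q maps M into W
  have hQmem : ∀ f ∈ M, Qlin χ S f ∈ W := by
    intro f hf
    constructor
    · intro h g
      rw [hQapp, hQapp]
      have hsum := sum_right hNH hS f hf.1 h g
      rw [hsum]
      ring
    · obtain ⟨T, hT⟩ := hf.2
      refine ⟨T, fun g hg => ?_⟩
      rw [hQapp] at hg
      have hne : ∑ s ∈ S, (((χ s)⁻¹ : Rˣ) : R) * f (↑s * g) ≠ 0 := by
        intro h0
        apply hg
        rw [h0, mul_zero]
      obtain ⟨s, _, hs⟩ := Finset.exists_ne_zero_of_sum_ne_zero hne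
      have hfs : f (↑s * g) ≠ 0 := fun h0 => hs (by rw [h0, mul_zero])
      obtain ⟨t, ht, n, hng⟩ := hT (↑s * g) hfs
      refine ⟨t, ht, s⁻¹ * ⟨↑n, hNH n.2⟩, ?_⟩
      have : g = (s : G)⁻¹ * ((n : G) * t) := by
        rw [← hng]; group
      rw [this]
      push_cast
      group
  -- W is contained in M
  have hWM : ∀ F ∈ W, F ∈ M := by
    intro F hF
    constructor
    · intro n g
      have := hF.1 (Subgroup.inclusion hNH n) g
      exact this
    · obtain ⟨T, hT⟩ := hF.2
      refine ⟨(S ×ˢ T).image (fun p => ((p.1 : ↥H) : G) * p.2), fun g hg => ?_⟩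
      obtain ⟨t, ht, h, hgt⟩ := hT g hg
      obtain ⟨sr, ⟨hsr, n, hn, heq⟩, _⟩ := hS h
      refine ⟨(sr : G) * t, Finset.mem_image.2 ⟨(sr, t), Finset.mk_mem_product hsr ht, rfl⟩,
        ⟨n, hn⟩, ?_⟩
      rw [hgt, heq]
      group
  -- q is the identity on W
  have hQid : ∀ F ∈ W, Qlin χ S F = F := by
    intro F hF
    funext g
    rw [hQapp]
    have : ∀ s ∈ S, (((χ s)⁻¹ : Rˣ) : R) * F (↑s * g) = F g := by
      intro s _
      rw [hF.1 s g, ← mul_assoc, ← Units.val_mul, inv_mul_cancel, Units.val_one, one_mul]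
    rw [Finset.sum_congr rfl this, Finset.sum_const, nsmul_eq_mul, ← mul_assoc,
      inv_mul_cancel₀ hcard, one_mul]
  -- the kernel characterization
  have hker_iff : ∀ f ∈ M, (Qlin χ S f = 0 ↔ f ∈ A) := by
    intro f hf
    constructor
    · intro h0
      have := hsub f hf
      rw [h0, zero_sub] at this
      simpa using neg_mem this
    · intro hfA
      exact hAker hfA
  refine ⟨fun f hf => by rw [hqQ]; exact hker_iff f hf, ?_⟩
  -- construct the equivalence
  let φ : ↥M →ₗ[R] ↥W :=
    LinearMap.codRestrict W ((Qlin χ S).comp M.subtype) (fun f => hQmem ↑f f.2)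
  have hφ_apply : ∀ f : ↥M, (φ f : G → R) = Qlin χ S ↑f := fun f => rfl
  have hker : LinearMap.ker φ = A.comap M.subtype := by
    ext f
    simp only [LinearMap.mem_ker, Submodule.mem_comap]
    constructor
    · intro h0
      have : Qlin χ S ↑f = 0 := by
        have := congrArg (Subtype.val) h0
        simpa [hφ_apply] using this
      exact (hker_iff ↑f f.2).mp this
    · intro hmem
      apply Subtype.ext
      rw [hφ_apply]
      exact (hker_iff ↑f f.2).mpr hmem
  have hle : A.comap M.subtype ≤ LinearMap.ker φ := hker.ge
  let L := Submodule.liftQ (A.comap M.subtype) φ hle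
  have hLinj : LinearMap.ker L = ⊥ := Submodule.ker_liftQ_eq_bot _ _ _ hker.le
  have hLsurj : Function.Surjective L := by
    intro F
    refine ⟨Submodule.Quotient.mk ⟨↑F, hWM ↑F F.2⟩, ?_⟩
    rw [Submodule.liftQ_apply]
    apply Subtype.ext
    rw [hφ_apply]
    exact hQid ↑F F.2
  have hbij : Function.Bijective L := ⟨LinearMap.ker_eq_bot.mp hLinj, hLsurj⟩
  refine ⟨LinearEquiv.ofBijective L hbij, fun f => ?_⟩
  have h2 : L (Submodule.Quotient.mk f) = φ f := Submodule.liftQ_apply _ _ _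
  calc ((LinearEquiv.ofBijective L hbij) (Submodule.Quotient.mk f) : G → R)
      = ((L (Submodule.Quotient.mk f) : ↥W) : G → R) := rfl
    _ = ((φ f : ↥W) : G → R) := by rw [h2]
    _ = Qlin χ S ↑f := hφ_apply f
    _ = q ↑f := by rw [hqQ]
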